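/- Let n be a positive integer, X ∈ 𝒯(n) a triangulation of the punctured n-gon, i, j ∈ ℤ/nℤ, and let d ∈ {1, …, n} be the representative of j − i modulo n. Then the fan subset satisfies |X_{i,j}| ≤ d − 1. Moreover, if d ≥ 2, then |X_{i,j}| = d − 1 if and only if the inner arc (i, d) (the inner arc from i to j) belongs to X. (Adachi, Lemma 2.3.) -/

import Mathlib

/-!
Combinatorial model of admissible arcs and triangulations of a regular
`n`-gon with one puncture (following Adachi, "The classification of
τ-tilting modules over Nakayama algebras").
-/

namespace Punctured

/-- Admissible arcs in a regular `n`-gon with one puncture: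
an *inner arc* `inner i t` runs counterclockwise from vertex `i` to vertex
`i + t` (with `2 ≤ t ≤ n` required for admissibility); a *projective arc*
`proj j` runs from the puncture to the vertex `j`. -/
inductive Arc (n : ℕ) : Type
  | inner (i : ZMod n) (t : ℕ) : Arc n
  | proj (j : ZMod n) : Arc n

namespace Arc

/-- The terminal point of an admissible arc. -/
def terminal {n : ℕ} : Arc n → ZMod n
  | .inner i t => i + (t : ZMod n)
  | .proj j => j

/-- Admissibility: inner arcs must have length `2 ≤ t ≤ n`. -/
def IsAdmissible {n : ℕ} : Arc n → Prop
  | .inner _ t => 2 ≤ t ∧ t ≤ n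
  | .proj _ => True

/-- Compatibility (non-crossing) of two admissible arcs, defined via
lifts to `ℤ`. -/
def Compatible {n : ℕ} : Arc n → Arc n → Prop
  | .inner i t, .inner k s =>
      ¬ ∃ x y : ℤ, (x : ZMod n) = i ∧ (y : ZMod n) = k ∧
        ((x < y ∧ y < x + (t : ℤ) ∧ x + (t : ℤ) < y + (s : ℤ)) ∨
         (y < x ∧ x < y + (s : ℤ) ∧ y + (s : ℤ) < x + (t : ℤ)))
  | .inner i t, .proj j =>
      ¬ ∃ x y : ℤ, (x : ZMod n) = i ∧ (y : ZMod n) = j ∧ x < y ∧ y < x + (t : ℤ)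
  | .proj j, .inner i t =>
      ¬ ∃ x y : ℤ, (x : ZMod n) = i ∧ (y : ZMod n) = j ∧ x < y ∧ y < x + (t : ℤ)
  | .proj _, .proj _ => True

end Arc

/-- A set of admissible arcs which is pairwise compatible. -/
def PairwiseCompatible (n : ℕ) (X : Set (Arc n)) : Prop :=
  (∀ a ∈ X, a.IsAdmissible) ∧ ∀ a ∈ X, ∀ b ∈ X, a.Compatible b

/-- A triangulation of the punctured `n`-gon: a pairwise compatible set of
admissible arcs, maximal under inclusion among such sets. -/
def IsTriangulation (n : ℕ) (X : Set (Arc n)) : Prop :=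
  PairwiseCompatible n X ∧
    ∀ Y : Set (Arc n), PairwiseCompatible n Y → X ⊆ Y → Y = X

/-- `top(X)`: for each residue class `c`, the number of arcs of `X` with
terminal point `c`. -/
noncomputable def topSeq (n : ℕ) (X : Set (Arc n)) : ZMod n → ℕ :=
  fun c => {arc ∈ X | Arc.terminal arc = c}.ncard

/-- The representative of `p` modulo `n` lying in `{1, …, n}`. -/
def resRep (n : ℕ) (p : ℤ) : ℕ := ((p - 1) % (n : ℤ)).toNat + 1

/-- `a'_p := Σ_{j=1}^{(p)_n} (a_j - 1)`, the `n`-periodic extension of the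
partial-sum sequence of `a`. -/
def psum (n : ℕ) (a : ZMod n → ℕ) (p : ℤ) : ℤ :=
  ∑ j ∈ Finset.Icc 1 (resRep n p), ((a ((j : ℕ) : ZMod n) : ℤ) - 1)

/-- `‖a'‖ := max {a'_1, …, a'_n}`. -/
noncomputable def pnorm (n : ℕ) (a : ZMod n → ℕ) : ℤ :=
  sSup ((fun i : ℕ => psum n a (i : ℤ)) '' Set.Icc 1 n)

/-- `δ_p = 1` if `a'_p = ‖a'‖` and `δ_p = 0` otherwise. -/
noncomputable def deltaInt (n : ℕ) (a : ZMod n → ℕ) (p : ℤ) : ℤ :=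
  if psum n a p = pnorm n a then 1 else 0

/-- `k_s^j := max {k ∈ ℤ : k < j - 1 and a'_k = a'_{j-1} + s}`. -/
noncomputable def kmax (n : ℕ) (a : ZMod n → ℕ) (j s : ℤ) : ℤ :=
  sSup {k : ℤ | k < j - 1 ∧ psum n a k = psum n a (j - 1) + s}

/-- `ℓ_j(a)`. -/
noncomputable def ellj (n : ℕ) (a : ZMod n → ℕ) (j : ℕ) : ℤ :=
  if (a ((j : ℕ) : ZMod n) : ℤ) - deltaInt n a (j : ℤ) = 0 then 0
  else (j : ℤ) - kmax n a (j : ℤ) ((a ((j : ℕ) : ZMod n) : ℤ) - deltaInt n a (j : ℤ))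

/-- The fan subset `X_{i,j}` of a set `X` of arcs: with `x₀` a fixed integer
lift of `i` and `d ∈ {1, …, n}` the representative of `j − i` modulo `n`,
it consists of the inner arcs `(k, s) ∈ X` admitting an integer lift
`x ≡ k (mod n)` with `x₀ ≤ x` and `x + s ≤ x₀ + d`. -/
def fanSet (n : ℕ) (X : Set (Arc n)) (x₀ : ℤ) (d : ℕ) : Set (Arc n) :=
  {arc | arc ∈ X ∧ ∃ k : ZMod n, ∃ s : ℕ, arc = Arc.inner k s ∧
    ∃ x : ℤ, (x : ZMod n) = k ∧ x₀ ≤ x ∧ x + (s : ℤ) ≤ x₀ + (d : ℤ)}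

/-- Crossing of two integer chords. -/
def Cross (c c' : ℤ × ℤ) : Prop :=
  (c.1 < c'.1 ∧ c'.1 < c.2 ∧ c.2 < c'.2) ∨ (c'.1 < c.1 ∧ c.1 < c'.2 ∧ c'.2 < c.2)

/-- A good family of chords in the window `[L,R]`. -/
def Good (L R : ℤ) (S : Finset (ℤ × ℤ)) : Prop :=
  (∀ c ∈ S, L ≤ c.1 ∧ c.1 + 2 ≤ c.2 ∧ c.2 ≤ R) ∧
  ∀ c ∈ S, ∀ c' ∈ S, ¬ Cross c c'

/-- Candidate points for the injection. -/
noncomputable def psiSet (S : Finset (ℤ × ℤ)) (c : ℤ × ℤ) : Finset ℤ :=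
  (Finset.Ioo c.1 c.2).filter
    (fun z => ∀ c' ∈ S, c' ≠ c → ¬(c.1 ≤ c'.1 ∧ c'.2 ≤ c.2 ∧ c'.1 < z ∧ z < c'.2))

lemma psiSet_nonempty {L R : ℤ} {S : Finset (ℤ × ℤ)} (h : Good L R S)
    {c : ℤ × ℤ} (hc : c ∈ S) : (psiSet S c).Nonempty := by
  obtain ⟨hb, hnc⟩ := h
  obtain ⟨h1, h2, h3⟩ := hb c hc
  by_cases hUne : (S.filter (fun c' => c.1 < c'.1 ∧ c'.2 = c.2)).Nonempty
  · have hUim : ((S.filter (fun c' => c.1 < c'.1 ∧ c'.2 = c.2)).image Prod.fst).Nonempty :=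
      hUne.image _
    set u := Finset.min' _ hUim with hu
    have humem := Finset.min'_mem _ hUim
    rw [← hu] at humem
    obtain ⟨cw, hcwU, hcwu⟩ := Finset.mem_image.mp humem
    obtain ⟨hcwS, hcw1, hcw2⟩ := Finset.mem_filter.mp hcwU
    obtain ⟨g1, g2, g3⟩ := hb cw hcwS
    refine ⟨u, Finset.mem_filter.mpr ⟨Finset.mem_Ioo.mpr ⟨by omega, by omega⟩, ?_⟩⟩
    intro c'' h'' hne hcross
    obtain ⟨ha, hb2, hc2, hd2⟩ := hcross
    have hnc1 := hnc c'' h'' cw hcwS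
    have : c''.2 = c.2 := by
      rcases lt_or_eq_of_le hb2 with hlt | heq
      · exact absurd (Or.inl ⟨by omega, by omega, by omega⟩) hnc1
      · exact heq
    have hne1 : c.1 < c''.1 := by
      rcases lt_or_eq_of_le ha with hlt | heq
      · exact hlt
      · exfalso; apply hne; ext <;> simp [← heq, this]
    have hmem'' : c''.1 ∈ (S.filter (fun c' => c.1 < c'.1 ∧ c'.2 = c.2)).image Prod.fst :=
      Finset.mem_image.mpr ⟨c'', Finset.mem_filter.mpr ⟨h'', hne1, this⟩, rfl⟩
    have := Finset.min'_le _ _ hmem''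
    omega
  · refine ⟨c.2 - 1, Finset.mem_filter.mpr ⟨Finset.mem_Ioo.mpr ⟨by omega, by omega⟩, ?_⟩⟩
    intro c'' h'' hne hcross
    obtain ⟨ha, hb2, hc2, hd2⟩ := hcross
    have h2'' : c''.2 = c.2 := by omega
    have hne1 : c.1 < c''.1 := by
      rcases lt_or_eq_of_le ha with hlt | heq
      · exact hlt
      · exfalso; apply hne; ext <;> simp [← heq, h2'']
    exact hUne ⟨c'', Finset.mem_filter.mpr ⟨h'', hne1, h2''⟩⟩

noncomputable def psi (S : Finset (ℤ × ℤ)) (c : ℤ × ℤ) : ℤ :=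
  if h : (psiSet S c).Nonempty then (psiSet S c).min' h else 0

lemma psi_mem {L R : ℤ} {S : Finset (ℤ × ℤ)} (h : Good L R S)
    {c : ℤ × ℤ} (hc : c ∈ S) : psi S c ∈ psiSet S c := by
  rw [psi, dif_pos (psiSet_nonempty h hc)]
  exact Finset.min'_mem _ _

lemma psi_injOn {L R : ℤ} {S : Finset (ℤ × ℤ)} (h : Good L R S) :
    ∀ c ∈ S, ∀ c' ∈ S, psi S c = psi S c' → c = c' := by
  have key : ∀ c ∈ S, ∀ c' ∈ S, psi S c = psi S c' →
      c.1 ≤ c'.1 → c'.2 ≤ c.2 → c = c' := by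
    intro c hc c' hc' heq h1 h2
    by_contra hne
    have hm := psi_mem h hc
    rw [psiSet, Finset.mem_filter] at hm
    have hm' := psi_mem h hc'
    rw [psiSet, Finset.mem_filter, Finset.mem_Ioo] at hm'
    exact hm.2 c' hc' (fun e => hne e.symm) ⟨h1, h2, by omega, by omega⟩
  intro c hc c' hc' heq
  have hm := psi_mem h hc
  rw [psiSet, Finset.mem_filter, Finset.mem_Ioo] at hm
  have hm' := psi_mem h hc'
  rw [psiSet, Finset.mem_filter, Finset.mem_Ioo] at hm'
  rw [heq] at hm
  -- psi S c' is in the interior of both c and c'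
  have hnc := h.2 c hc c' hc'
  rw [Cross] at hnc
  push_neg at hnc
  by_cases h1 : c.1 ≤ c'.1
  · by_cases h2 : c'.2 ≤ c.2
    · exact key c hc c' hc' heq h1 h2
    · -- c.1 ≤ c'.1, c.2 < c'.2 : need c.1 = c'.1? no: potential cross unless c.1 = c'.1
      -- c.1 ≤ c'.1 < psi < c.2 < c'.2 : if c.1 < c'.1 then cross
      rcases lt_or_eq_of_le h1 with hlt | heq1
      · exfalso
        obtain ⟨a1, a2⟩ := hm
        obtain ⟨a1', a2'⟩ := hm'
        have := hnc.1 hlt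
        omega
      · -- c.1 = c'.1 and c.2 ≤ c'.2 : c nested in c'
        exact (key c' hc' c hc heq.symm (by omega) (by omega)).symm
  · -- c'.1 < c.1 : then c nested in c' or cross
    push_neg at h1
    have h2 : c.2 ≤ c'.2 := by
      by_contra h2
      push_neg at h2
      obtain ⟨a1, a2⟩ := hm
      obtain ⟨a1', a2'⟩ := hm'
      have := hnc.2 h1
      omega
    exact (key c' hc' c hc heq.symm (by omega) h2).symm

/-- Upper bound: a good family in `[L,R]` has at most `R-L-1` chords. -/
lemma good_card_le {L R : ℤ} {S : Finset (ℤ × ℤ)} (h : Good L R S) :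
    (S.card : ℤ) ≤ max (R - L - 1) 0 := by
  have : S.card ≤ (Finset.Ioo L R).card := by
    apply Finset.card_le_card_of_injOn (psi S)
    · intro c hc
      have hm := psi_mem h hc
      rw [psiSet, Finset.mem_filter, Finset.mem_Ioo] at hm
      obtain ⟨hb1, hb2, hb3⟩ := h.1 c hc
      exact Finset.mem_Ioo.mpr ⟨by omega, by omega⟩
    · intro c hc c' hc' heq
      exact psi_injOn h c hc c' hc' heq
  have hcard : (Finset.Ioo L R).card = (R - L - 1).toNat := by
    rw [Int.card_Ioo]
  omega


/-- Nested chords do not cross. -/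
lemma noCross_inside {c c' : ℤ × ℤ} (h1 : c.1 ≤ c'.1) (h2 : c'.2 ≤ c.2) :
    ¬ Cross c c' ∧ ¬ Cross c' c := by
  constructor <;> rintro (⟨a1, a2, a3⟩ | ⟨a1, a2, a3⟩) <;> omega

/-- Separated chords do not cross. -/
lemma noCross_sep {c c' : ℤ × ℤ} (h : c.2 ≤ c'.1) (h2 : c.1 < c.2) :
    ¬ Cross c c' ∧ ¬ Cross c' c := by
  constructor <;> rintro (⟨a1, a2, a3⟩ | ⟨a1, a2, a3⟩) <;> omega

lemma full_mem_of_card {L R : ℤ} {S : Finset (ℤ × ℤ)} (hLR : L + 2 ≤ R)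
    (h : Good L R S) (hcard : (S.card : ℤ) = R - L - 1) : (L, R) ∈ S := by
  by_contra habs
  have hgood : Good L R (insert (L, R) S) := by
    constructor
    · intro c hc
      rcases Finset.mem_insert.mp hc with rfl | hc
      · exact ⟨le_refl _, by simpa using hLR, le_refl _⟩
      · exact h.1 c hc
    · intro c hc c' hc'
      rcases Finset.mem_insert.mp hc with rfl | hc <;>
        rcases Finset.mem_insert.mp hc' with rfl | hc'
      · rintro (⟨a1, _⟩ | ⟨a1, _⟩) <;> exact absurd a1 (lt_irrefl _)
      · exact (noCross_inside (c := ((L, R) : ℤ × ℤ)) (h.1 c' hc').1 (h.1 c' hc').2.2).1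
      · exact (noCross_inside (c := ((L, R) : ℤ × ℤ)) (h.1 c hc).1 (h.1 c hc).2.2).2
      · exact h.2 c hc c' hc'
  have := good_card_le hgood
  rw [Finset.card_insert_of_notMem habs] at this
  push_cast at this
  omega

lemma exists_addable : ∀ N : ℕ, ∀ L R : ℤ, (R - L).toNat ≤ N →
    ∀ S : Finset (ℤ × ℤ), Good L R S → (L, R) ∈ S → (S.card : ℤ) < R - L - 1 →
    ∃ c : ℤ × ℤ, c ∉ S ∧ L ≤ c.1 ∧ c.1 + 2 ≤ c.2 ∧ c.2 ≤ R ∧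
      ∀ c' ∈ S, ¬ Cross c c' ∧ ¬ Cross c' c := by
  intro N
  induction N with
  | zero =>
    intro L R hN S h hfull hcard
    have h2 := (h.1 _ hfull).2.1
    simp only at h2
    omega
  | succ N ih =>
    intro L R hN S h hfull hcard
    have hb := h.1
    have hnc := h.2
    have hR3 : L + 3 ≤ R := by
      have h1 : (1 : ℤ) ≤ S.card := by
        have : 0 < S.card := Finset.card_pos.mpr ⟨_, hfull⟩
        omega
      have h2 := (hb _ hfull).2.1
      simp only at h2
      omega
    by_cases hB : (S.filter (fun c => c.2 = R ∧ L < c.1 ∧ c.1 < R - 1)).Nonempty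
    · -- there is a blocking chord; take the minimal left endpoint a
      have hBim := hB.image Prod.fst
      set a := Finset.min' _ hBim
        with ha
      have hamem := Finset.min'_mem _ hBim
      rw [← ha] at hamem
      obtain ⟨cw, hcwF, hcwa⟩ := Finset.mem_image.mp hamem
      obtain ⟨hcwS, hcw2, hcw3, hcw4⟩ := Finset.mem_filter.mp hcwF
      have hcweq : cw = (a, R) := by ext <;> simp [hcwa, hcw2]
      rw [hcweq] at hcwS
      have haL : L < a := by omega
      have haR : a < R - 1 := by omega
      have hamin : ∀ c ∈ S, c.2 = R → L < c.1 → c.1 < R - 1 → a ≤ c.1 := by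
        intro c hc e1 e2 e3
        exact Finset.min'_le _ _
          (Finset.mem_image.mpr ⟨c, Finset.mem_filter.mpr ⟨hc, e1, e2, e3⟩, rfl⟩)
      set Shi := S.filter (fun c => a ≤ c.1) with hShi
      set Slo := S.filter (fun c => c.2 ≤ a) with hSlo
      have hclass : ∀ c ∈ S, c = (L, R) ∨ a ≤ c.1 ∨ c.2 ≤ a := by
        intro c hc
        have hnc1 := hnc c hc (a, R) hcwS
        obtain ⟨e1, e2, e3⟩ := hb c hc
        by_cases q1 : a ≤ c.1
        · exact Or.inr (Or.inl q1)
        by_cases q2 : c.2 ≤ a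
        · exact Or.inr (Or.inr q2)
        push_neg at q1 q2
        left
        have hc2R : c.2 = R := by
          by_contra hq
          exact hnc1 (Or.inl ⟨q1, q2, by omega⟩)
        have hcl : c.1 = L := by
          by_contra hq
          have hgt : L < c.1 := lt_of_le_of_ne e1 (Ne.symm hq)
          have := hamin c hc hc2R hgt (by omega)
          omega
        ext
        · exact hcl
        · exact hc2R
      have hdisj : Disjoint Shi Slo := by
        rw [Finset.disjoint_left]
        intro c hc1 hc2
        rw [hShi, Finset.mem_filter] at hc1
        rw [hSlo, Finset.mem_filter] at hc2
        have := (hb c hc1.1).2.1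
        omega
      have hfullnot : (L, R) ∉ Shi ∪ Slo := by
        intro hmem
        rcases Finset.mem_union.mp hmem with hm | hm
        · have h2 := (Finset.mem_filter.mp hm).2
          simp only at h2
          omega
        · have h2 := (Finset.mem_filter.mp hm).2
          simp only at h2
          omega
      have hSeq : S = insert (L, R) (Shi ∪ Slo) := by
        apply Finset.Subset.antisymm
        · intro c hc
          rcases hclass c hc with rfl | hq | hq
          · exact Finset.mem_insert_self _ _
          · exact Finset.mem_insert_of_mem (Finset.mem_union_left _
              (Finset.mem_filter.mpr ⟨hc, hq⟩))
          · exact Finset.mem_insert_of_mem (Finset.mem_union_right _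
              (Finset.mem_filter.mpr ⟨hc, hq⟩))
        · intro c hc
          rcases Finset.mem_insert.mp hc with rfl | hc
          · exact hfull
          · rcases Finset.mem_union.mp hc with hm | hm
            · exact (Finset.mem_filter.mp hm).1
            · exact (Finset.mem_filter.mp hm).1
      have hcards : S.card = 1 + Shi.card + Slo.card := by
        rw [hSeq, Finset.card_insert_of_notMem hfullnot,
          Finset.card_union_of_disjoint hdisj]
        omega
      have hgoodhi : Good a R Shi := by
        refine ⟨fun c hc => ?_, fun c hc c' hc' => hnc c (Finset.mem_filter.mp hc).1
          c' (Finset.mem_filter.mp hc').1⟩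
        obtain ⟨hcS, hq⟩ := Finset.mem_filter.mp hc
        exact ⟨hq, (hb c hcS).2.1, (hb c hcS).2.2⟩
      have hgoodlo : Good L a Slo := by
        refine ⟨fun c hc => ?_, fun c hc c' hc' => hnc c (Finset.mem_filter.mp hc).1
          c' (Finset.mem_filter.mp hc').1⟩
        obtain ⟨hcS, hq⟩ := Finset.mem_filter.mp hc
        exact ⟨(hb c hcS).1, (hb c hcS).2.1, hq⟩
      have hfullhi : (a, R) ∈ Shi := Finset.mem_filter.mpr ⟨hcwS, le_refl _⟩
      by_cases hhi : (Shi.card : ℤ) < R - a - 1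
      · obtain ⟨c, hcnot, e1, e2, e3, hcompat⟩ :=
          ih a R (by omega) Shi hgoodhi hfullhi hhi
        refine ⟨c, ?_, by omega, e2, e3, ?_⟩
        · intro hcS
          exact hcnot (Finset.mem_filter.mpr ⟨hcS, e1⟩)
        · intro c' hc'
          rcases hclass c' hc' with rfl | hq | hq
          · have := noCross_inside (c := ((L, R) : ℤ × ℤ)) (c' := c) (by omega) e3
            exact ⟨this.2, this.1⟩
          · exact hcompat c' (Finset.mem_filter.mpr ⟨hc', hq⟩)
          · -- c' entirely left of c
            have := noCross_sep (c := c') (c' := c) (by omega) (by have := (hb c' hc').2.1; omega)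
            exact ⟨this.2, this.1⟩
      · push_neg at hhi
        have hlo : (Slo.card : ℤ) < a - L - 1 := by
          have := good_card_le hgoodhi
          have hc' : ((1 + Shi.card + Slo.card : ℕ) : ℤ) < R - L - 1 := by
            rw [← hcards]; exact hcard
          push_cast at hc'
          omega
        have haL2 : L + 2 ≤ a := by
          have : (0 : ℤ) ≤ (Slo.card : ℤ) := Int.natCast_nonneg _
          omega
        by_cases hLa : (L, a) ∈ Slo
        · obtain ⟨c, hcnot, e1, e2, e3, hcompat⟩ :=
            ih L a (by omega) Slo hgoodlo hLa hlo
          refine ⟨c, ?_, e1, e2, by omega, ?_⟩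
          · intro hcS
            exact hcnot (Finset.mem_filter.mpr ⟨hcS, e3⟩)
          · intro c' hc'
            rcases hclass c' hc' with rfl | hq | hq
            · have := noCross_inside (c := ((L, R) : ℤ × ℤ)) (c' := c) e1 (by omega)
              exact ⟨this.2, this.1⟩
            · have := noCross_sep (c := c) (c' := c') (by omega) (by omega)
              exact ⟨this.1, this.2⟩
            · exact hcompat c' (Finset.mem_filter.mpr ⟨hc', hq⟩)
        · refine ⟨(L, a), ?_, le_refl _, by simpa using haL2, by omega, ?_⟩
          · intro hmem
            exact hLa (Finset.mem_filter.mpr ⟨hmem, le_refl _⟩)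
          · intro c' hc'
            rcases hclass c' hc' with rfl | hq | hq
            · have := noCross_inside (c := (L, R)) (c' := ((L, a) : ℤ × ℤ))
                (le_refl _) (by simp only; omega)
              exact ⟨this.2, this.1⟩
            · exact noCross_sep (c := ((L, a) : ℤ × ℤ)) (by simpa using hq)
                (by simp only; omega)
            · exact noCross_inside (c := ((L, a) : ℤ × ℤ)) (by simpa using (hb c' hc').1)
                (by simpa using hq)
    · by_cases h1 : (L, R - 1) ∈ S
      · set S1 := S.erase (L, R) with hS1
        have hS1good : Good L (R - 1) S1 := by
          constructor
          · intro c hc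
            have hcS := Finset.mem_of_mem_erase hc
            obtain ⟨e1, e2, e3⟩ := hb c hcS
            refine ⟨e1, e2, ?_⟩
            rcases lt_or_eq_of_le e3 with hlt | heq
            · omega
            · exfalso
              have hcne := Finset.ne_of_mem_erase hc
              have hnotB : ¬ (L < c.1 ∧ c.1 < R - 1) := by
                intro ⟨q1, q2⟩
                exact hB ⟨c, Finset.mem_filter.mpr ⟨hcS, heq, q1, q2⟩⟩
              apply hcne
              have hcl : c.1 = L := by
                rcases lt_or_eq_of_le e1 with hlt1 | heq1
                · exfalso; exact hnotB ⟨hlt1, by omega⟩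
                · omega
              ext
              · exact hcl
              · exact heq
          · intro c hc c' hc'
            exact hnc c (Finset.mem_of_mem_erase hc) c' (Finset.mem_of_mem_erase hc')
        have h1' : (L, R - 1) ∈ S1 := by
          refine Finset.mem_erase.mpr ⟨?_, h1⟩
          intro heq
          have : R - 1 = R := congrArg Prod.snd heq
          omega
        have hcard1 : (S1.card : ℤ) < (R - 1) - L - 1 := by
          rw [hS1, Finset.card_erase_of_mem hfull]
          have h1c : 1 ≤ S.card := Finset.card_le_card (Finset.singleton_subset_iff.mpr hfull)
          push_cast [h1c]
          omega
        obtain ⟨c, hcnot, e1, e2, e3, hcompat⟩ :=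
          ih L (R - 1) (by omega) S1 hS1good h1' hcard1
        refine ⟨c, ?_, e1, e2, by omega, ?_⟩
        · intro hcS
          apply hcnot
          refine Finset.mem_erase.mpr ⟨?_, hcS⟩
          intro heq
          have : c.2 = R := congrArg Prod.snd heq
          omega
        · intro c' hc'
          by_cases hq : c' = (L, R)
          · subst hq
            have := noCross_inside (c := ((L, R) : ℤ × ℤ)) (c' := c) e1 (by omega)
            exact ⟨this.2, this.1⟩
          · exact hcompat c' (Finset.mem_erase.mpr ⟨hq, hc'⟩)
      · refine ⟨(L, R - 1), h1, le_refl _, by simp only; omega, by omega, ?_⟩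
        intro c' hc'
        obtain ⟨e1, e2, e3⟩ := hb c' hc'
        have key : ¬ (R - 1 < c'.2 ∧ L < c'.1 ∧ c'.1 < R - 1) := by
          rintro ⟨q1, q2, q3⟩
          exact hB ⟨c', Finset.mem_filter.mpr ⟨hc', by omega, q2, q3⟩⟩
        constructor
        · rintro (⟨a1, a2, a3⟩ | ⟨a1, a2, a3⟩) <;> simp only at a1 a2 a3
          · exact key ⟨a3, a1, a2⟩
          · omega
        · rintro (⟨a1, a2, a3⟩ | ⟨a1, a2, a3⟩) <;> simp only at a1 a2 a3
          · omega
          · exact key ⟨a3, a1, a2⟩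


/-! Bridge lemmas. -/

lemma cast_dvd_sub {n : ℕ} {x y : ℤ} (h : (x : ZMod n) = (y : ZMod n)) :
    (n : ℤ) ∣ y - x :=
  Int.ModEq.dvd ((ZMod.intCast_eq_intCast_iff x y n).mp h)

lemma cast_add_dvd {n : ℕ} (y m : ℤ) (h : (n : ℤ) ∣ m) :
    ((y + m : ℤ) : ZMod n) = (y : ZMod n) := by
  push_cast
  rw [(ZMod.intCast_zmod_eq_zero_iff_dvd m n).mpr h, add_zero]

/-- Core compatibility: a chord inside the window `[x₀, x₀+d]` which crosses
no chord of `T` is compatible (in the inner-inner sense) with every inner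
arc of `X`, provided the full arc `inner i d` belongs to `X`. -/
lemma compat_inner_core (n : ℕ) (X : Set (Arc n))
    (hadm : ∀ a ∈ X, a.IsAdmissible)
    (hcomp : ∀ a ∈ X, ∀ b ∈ X, a.Compatible b)
    (i : ZMod n) (d : ℕ) (hdn : d ≤ n) (x₀ : ℤ) (hx₀ : (x₀ : ZMod n) = i)
    (hin : Arc.inner i d ∈ X)
    (c : ℤ × ℤ) (hc1 : x₀ ≤ c.1) (hc2 : c.1 + 2 ≤ c.2) (hc3 : c.2 ≤ x₀ + d)
    (hcT : ∀ p : ℤ × ℤ, Arc.inner ((p.1 : ZMod n)) ((p.2 - p.1).toNat) ∈ X →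
      x₀ ≤ p.1 → p.1 + 2 ≤ p.2 → p.2 ≤ x₀ + d → ¬ Cross c p ∧ ¬ Cross p c)
    (k : ZMod n) (s : ℕ) (hb : Arc.inner k s ∈ X) :
    ¬ ∃ x y : ℤ, (x : ZMod n) = (c.1 : ZMod n) ∧ (y : ZMod n) = k ∧
      ((x < y ∧ y < x + (((c.2 - c.1).toNat : ℕ) : ℤ) ∧
          x + (((c.2 - c.1).toNat : ℕ) : ℤ) < y + (s : ℤ)) ∨
       (y < x ∧ x < y + (s : ℤ) ∧ y + (s : ℤ) < x + (((c.2 - c.1).toNat : ℕ) : ℤ))) := by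
  have ht : (((c.2 - c.1).toNat : ℕ) : ℤ) = c.2 - c.1 := Int.toNat_of_nonneg (by omega)
  obtain ⟨hs2, hsn⟩ := hadm _ hb
  have hds : (2 : ℤ) ≤ (s : ℤ) := by exact_mod_cast hs2
  rintro ⟨x, y, hx, hy, hpat⟩
  rw [ht] at hpat
  have hm : (n : ℤ) ∣ c.1 - x := cast_dvd_sub hx
  set y₁ := y + (c.1 - x) with hy₁
  have hy₁c : ((y₁ : ℤ) : ZMod n) = k := by rw [cast_add_dvd y _ hm]; exact hy
  have hIDcomp := hcomp _ hin _ hb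
  rcases hpat with ⟨p1, p2, p3⟩ | ⟨p1, p2, p3⟩
  · -- c.1 < y₁ < c.2 < y₁ + s
    by_cases hcase : y₁ + s ≤ x₀ + d
    · have hmem := hcT (y₁, y₁ + (s : ℤ))
        (by
          have : ((y₁ + (s : ℤ) - y₁).toNat : ℤ) = (s : ℤ) := by
            rw [Int.toNat_of_nonneg (by omega)]; omega
          have hnat : (y₁ + (s : ℤ) - y₁).toNat = s := by exact_mod_cast this
          simpa [hnat, hy₁c] using hb)
        (by simp only; omega) (by simp only; omega) (by simp only; omega)
      exact hmem.1 (Or.inl ⟨by omega, by omega, by omega⟩)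
    · exact hIDcomp ⟨x₀, y₁, hx₀, hy₁c, Or.inl ⟨by omega, by omega, by omega⟩⟩
  · -- y₁ < c.1 < y₁ + s < c.2
    by_cases hcase : x₀ ≤ y₁
    · have hmem := hcT (y₁, y₁ + (s : ℤ))
        (by
          have : ((y₁ + (s : ℤ) - y₁).toNat : ℤ) = (s : ℤ) := by
            rw [Int.toNat_of_nonneg (by omega)]; omega
          have hnat : (y₁ + (s : ℤ) - y₁).toNat = s := by exact_mod_cast this
          simpa [hnat, hy₁c] using hb)
        (by simp only; omega) (by simp only; omega) (by simp only; omega)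
      exact hmem.2 (Or.inl ⟨by omega, by omega, by omega⟩)
    · exact hIDcomp ⟨x₀, y₁, hx₀, hy₁c, Or.inr ⟨by omega, by omega, by omega⟩⟩

lemma compat_proj_core (n : ℕ) (X : Set (Arc n))
    (hcomp : ∀ a ∈ X, ∀ b ∈ X, a.Compatible b)
    (i : ZMod n) (d : ℕ) (x₀ : ℤ) (hx₀ : (x₀ : ZMod n) = i)
    (hin : Arc.inner i d ∈ X)
    (c : ℤ × ℤ) (hc1 : x₀ ≤ c.1) (hc2 : c.1 + 2 ≤ c.2) (hc3 : c.2 ≤ x₀ + d)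
    (w : ZMod n) (hw : Arc.proj w ∈ X) :
    ¬ ∃ x y : ℤ, (x : ZMod n) = (c.1 : ZMod n) ∧ (y : ZMod n) = w ∧
      x < y ∧ y < x + (((c.2 - c.1).toNat : ℕ) : ℤ) := by
  have ht : (((c.2 - c.1).toNat : ℕ) : ℤ) = c.2 - c.1 := Int.toNat_of_nonneg (by omega)
  rintro ⟨x, y, hx, hy, h1, h2⟩
  rw [ht] at h2
  have hm : (n : ℤ) ∣ c.1 - x := cast_dvd_sub hx
  have hy₁c : ((y + (c.1 - x) : ℤ) : ZMod n) = w := by rw [cast_add_dvd y _ hm]; exact hy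
  exact hcomp _ hin _ hw ⟨x₀, y + (c.1 - x), hx₀, hy₁c, by omega, by omega⟩

/-- **Adachi, Lemma 2.3.** Let `X` be a triangulation of the punctured
`n`-gon, `i, j ∈ ℤ/nℤ`, and `d ∈ {1, …, n}` the representative of `j − i`
modulo `n`. Then `|X_{i,j}| ≤ d − 1`, and if `d ≥ 2` then `|X_{i,j}| = d − 1`
if and only if the inner arc from `i` to `j` belongs to `X`. -/
theorem fan_card (n : ℕ) (hn : 0 < n) (X : Set (Arc n))
    (hX : IsTriangulation n X) (i j : ZMod n) (d : ℕ)
    (hd1 : 1 ≤ d) (hdn : d ≤ n) (hdij : ((d : ℕ) : ZMod n) = j - i)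
    (x₀ : ℤ) (hx₀ : (x₀ : ZMod n) = i) :
    (fanSet n X x₀ d).ncard ≤ d - 1 ∧
      (2 ≤ d → ((fanSet n X x₀ d).ncard = d - 1 ↔ Arc.inner i d ∈ X)) := by
  classical
  obtain ⟨⟨hadm, hcomp⟩, hmax⟩ := hX
  set F : ℤ × ℤ → Arc n := fun p => Arc.inner ((p.1 : ZMod n)) ((p.2 - p.1).toNat) with hFdef
  set T : Set (ℤ × ℤ) := {p | F p ∈ X ∧ x₀ ≤ p.1 ∧ p.1 + 2 ≤ p.2 ∧ p.2 ≤ x₀ + (d : ℤ)}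
    with hTdef
  have hTfin : T.Finite := by
    apply Set.Finite.subset ((Set.finite_Icc x₀ (x₀ + (d : ℤ))).prod
      (Set.finite_Icc x₀ (x₀ + (d : ℤ))))
    rintro ⟨u, v⟩ ⟨_, h1, h2, h3⟩
    exact ⟨⟨h1, by simp only at *; omega⟩, ⟨by simp only at *; omega, h3⟩⟩
  -- the fan is the image of T
  have hF : fanSet n X x₀ d = F '' T := by
    ext arc
    constructor
    · rintro ⟨hmem, k, s, rfl, x, hxk, hx1, hx2⟩
      obtain ⟨hs2, hsn⟩ := hadm _ hmem
      refine ⟨(x, x + (s : ℤ)), ⟨?_, hx1, by simp only; omega, by simpa using hx2⟩, ?_⟩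
      · show F (x, x + (s : ℤ)) ∈ X
        have hnat : ((x + (s : ℤ) - x).toNat) = s := by
          rw [show x + (s : ℤ) - x = (s : ℤ) by ring, Int.toNat_natCast]
        simp only [hFdef, hnat, hxk]
        exact hmem
      · have hnat : ((x + (s : ℤ) - x).toNat) = s := by
          rw [show x + (s : ℤ) - x = (s : ℤ) by ring, Int.toNat_natCast]
        simp only [hFdef, hnat, hxk]
    · rintro ⟨⟨u, v⟩, ⟨hmem, h1, h2, h3⟩, rfl⟩
      refine ⟨hmem, (u : ZMod n), (v - u).toNat, rfl, u, rfl, h1, ?_⟩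
      have : (((v - u).toNat : ℕ) : ℤ) = v - u := Int.toNat_of_nonneg (by simp only at *; omega)
      simp only at *
      omega
  have hinj : Set.InjOn F T := by
    rintro ⟨u, v⟩ ⟨_, b1, b2, b3⟩ ⟨u', v'⟩ ⟨_, b1', b2', b3'⟩ heq
    simp only [hFdef, Arc.inner.injEq] at heq
    obtain ⟨hcast, hlen⟩ := heq
    simp only at b1 b2 b3 b1' b2' b3'
    have hlen' : v - u = v' - u' := by
      have e1 : (((v - u).toNat : ℕ) : ℤ) = v - u := Int.toNat_of_nonneg (by omega)
      have e2 : (((v' - u').toNat : ℕ) : ℤ) = v' - u' := Int.toNat_of_nonneg (by omega)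
      omega
    have hdvd : (n : ℤ) ∣ u' - u := cast_dvd_sub hcast
    have : u' - u = 0 := by
      apply Int.eq_zero_of_abs_lt_dvd hdvd
      rw [abs_lt]
      constructor <;> omega
    have hu : u = u' := by omega
    have hv : v = v' := by omega
    simp [hu, hv]
  have hgood : Good x₀ (x₀ + (d : ℤ)) hTfin.toFinset := by
    constructor
    · intro c hc
      rw [Set.Finite.mem_toFinset] at hc
      exact ⟨hc.2.1, hc.2.2.1, hc.2.2.2⟩
    · intro c hc c' hc' hcross
      rw [Set.Finite.mem_toFinset] at hc hc'
      have e1 : (((c.2 - c.1).toNat : ℕ) : ℤ) = c.2 - c.1 :=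
        Int.toNat_of_nonneg (by have := hc.2.2.1; omega)
      have e2 : (((c'.2 - c'.1).toNat : ℕ) : ℤ) = c'.2 - c'.1 :=
        Int.toNat_of_nonneg (by have := hc'.2.2.1; omega)
      apply hcomp _ hc.1 _ hc'.1
      refine ⟨c.1, c'.1, rfl, rfl, ?_⟩
      rcases hcross with ⟨a1, a2, a3⟩ | ⟨a1, a2, a3⟩
      · exact Or.inl ⟨a1, by omega, by omega⟩
      · exact Or.inr ⟨a1, by omega, by omega⟩
  have hncard : (fanSet n X x₀ d).ncard = hTfin.toFinset.card := by
    rw [hF, Set.ncard_image_of_injOn hinj, Set.ncard_eq_toFinset_card T hTfin]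
  have hle := good_card_le hgood
  have hmax' : max (x₀ + (d : ℤ) - x₀ - 1) 0 = (d : ℤ) - 1 := by omega
  rw [hmax'] at hle
  have hcardle : (fanSet n X x₀ d).ncard ≤ d - 1 := by
    rw [hncard]; omega
  refine ⟨hcardle, fun hd2 => ?_⟩
  constructor
  · -- equality → full arc present
    intro hcard
    have hcard' : ((hTfin.toFinset.card : ℕ) : ℤ) = x₀ + (d : ℤ) - x₀ - 1 := by
      rw [← hncard, hcard]
      push_cast [hd1]
      omega
    have hfull := full_mem_of_card (by omega) hgood hcard'
    rw [Set.Finite.mem_toFinset] at hfull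
    have := hfull.1
    have hnat : ((x₀ + (d : ℤ) - x₀).toNat) = d := by
      rw [show x₀ + (d : ℤ) - x₀ = (d : ℤ) by ring, Int.toNat_natCast]
    simp only [hFdef, hnat, hx₀] at this
    exact this
  · -- full arc present → equality
    intro hin
    by_contra hne
    have hlt : (hTfin.toFinset.card : ℤ) < x₀ + (d : ℤ) - x₀ - 1 := by
      have : (fanSet n X x₀ d).ncard < d - 1 := by omega
      rw [hncard] at this
      omega
    have hfullT : (x₀, x₀ + (d : ℤ)) ∈ hTfin.toFinset := by
      rw [Set.Finite.mem_toFinset]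
      refine ⟨?_, le_refl _, by simp only; omega, le_refl _⟩
      show F (x₀, x₀ + (d : ℤ)) ∈ X
      have hnat : ((x₀ + (d : ℤ) - x₀).toNat) = d := by
        rw [show x₀ + (d : ℤ) - x₀ = (d : ℤ) by ring, Int.toNat_natCast]
      simp only [hFdef, hnat, hx₀]
      exact hin
    obtain ⟨c, hcnot, e1, e2, e3, hcompat⟩ := exists_addable (x₀ + (d : ℤ) - x₀).toNat
      x₀ (x₀ + (d : ℤ)) (le_refl _) hTfin.toFinset hgood hfullT hlt
    rw [Set.Finite.mem_toFinset] at hcnot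
    -- the new arc
    set A : Arc n := F c with hA
    have hAX : A ∉ X := fun hAX => hcnot ⟨hAX, e1, e2, e3⟩
    have hcT : ∀ p : ℤ × ℤ, F p ∈ X → x₀ ≤ p.1 → p.1 + 2 ≤ p.2 → p.2 ≤ x₀ + (d : ℤ) →
        ¬ Cross c p ∧ ¬ Cross p c := by
      intro p q1 q2 q3 q4
      apply hcompat
      rw [Set.Finite.mem_toFinset]
      exact ⟨q1, q2, q3, q4⟩
    have ht : (((c.2 - c.1).toNat : ℕ) : ℤ) = c.2 - c.1 := Int.toNat_of_nonneg (by omega)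
    have hpc : PairwiseCompatible n (insert A X) := by
      constructor
      · intro a ha
        rcases Set.mem_insert_iff.mp ha with rfl | ha
        · exact ⟨by omega, by omega⟩
        · exact hadm a ha
      · intro a ha b hb
        rcases Set.mem_insert_iff.mp ha with rfl | ha <;>
          rcases Set.mem_insert_iff.mp hb with rfl | hb
        · -- A vs A
          rintro ⟨x, y, hx, hy, hpat⟩
          have hdvd : (n : ℤ) ∣ y - x := cast_dvd_sub (hx.trans hy.symm)
          have hz : y - x = 0 := by
            apply Int.eq_zero_of_abs_lt_dvd hdvd
            rw [abs_lt]
            rcases hpat with ⟨p1, p2, p3⟩ | ⟨p1, p2, p3⟩ <;> constructor <;> omega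
          rcases hpat with ⟨p1, p2, p3⟩ | ⟨p1, p2, p3⟩ <;> omega
        · -- A vs b ∈ X
          cases b with
          | inner k s =>
            exact compat_inner_core n X hadm hcomp i d hdn x₀ hx₀ hin c e1 e2 e3 hcT k s hb
          | proj w =>
            exact compat_proj_core n X hcomp i d x₀ hx₀ hin c e1 e2 e3 w hb
        · -- a ∈ X vs A
          cases a with
          | inner k s =>
            have hcore := compat_inner_core n X hadm hcomp i d hdn x₀ hx₀ hin c e1 e2 e3 hcT k s ha
            rintro ⟨x, y, hx, hy, hpat⟩
            apply hcore
            refine ⟨y, x, hy, hx, ?_⟩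
            rcases hpat with ⟨p1, p2, p3⟩ | ⟨p1, p2, p3⟩
            · exact Or.inr ⟨p1, p2, p3⟩
            · exact Or.inl ⟨p1, p2, p3⟩
          | proj w =>
            exact compat_proj_core n X hcomp i d x₀ hx₀ hin c e1 e2 e3 w ha
        · exact hcomp a ha b hb
    have := hmax _ hpc (Set.subset_insert A X)
    apply hAX
    rw [← this]
    exact Set.mem_insert A X

end Punctured
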